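/- The Kreweras complement map Kr : NC(n) → NC(n) is a bijection. -/

import Mathlib

open scoped Classical


/-- Two blocks `B`, `C` cross: there are `i < k < p < q` with `i, p ∈ B` and `k, q ∈ C`. -/
def Crosses {n : ℕ} (B C : Finset (Fin n)) : Prop :=
  ∃ i k p q : Fin n, i < k ∧ k < p ∧ p < q ∧ i ∈ B ∧ p ∈ B ∧ k ∈ C ∧ q ∈ C

/-- `π` is a non-crossing linked partition of `{1, …, n}` (encoded as `Fin n`):
its (nonempty) blocks cover `Fin n`, are pairwise non-crossing, any two distinct blocks
intersect in at most one element, and if two distinct blocks intersect in `{j}` then both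
blocks have at least two elements and `j` is the minimal element of exactly one of them. -/
def IsNCL (n : ℕ) (π : Finset (Finset (Fin n))) : Prop :=
  (∀ B ∈ π, B.Nonempty) ∧
  (∀ x : Fin n, ∃ B ∈ π, x ∈ B) ∧
  (∀ B ∈ π, ∀ C ∈ π, B ≠ C → ¬ Crosses B C) ∧
  (∀ B ∈ π, ∀ C ∈ π, B ≠ C → (B ∩ C).card ≤ 1 ∧
    ∀ j : Fin n, B ∩ C = {j} →
      2 ≤ B.card ∧ 2 ≤ C.card ∧
        Xor' (B.min = (j : WithBot (Fin n))) (C.min = (j : WithBot (Fin n))))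

/-- `π` is a non-crossing partition: a non-crossing linked partition with pairwise
disjoint blocks. -/
def IsNC (n : ℕ) (π : Finset (Finset (Fin n))) : Prop :=
  IsNCL n π ∧ ∀ B ∈ π, ∀ C ∈ π, B ≠ C → Disjoint B C

/-- `Refines n σ π` (i.e. `σ ⪯ π`): every block of `π` is a union of blocks of `σ`. -/
def Refines (n : ℕ) (σ π : Finset (Finset (Fin n))) : Prop :=
  ∀ B ∈ π, ∃ S : Finset (Finset (Fin n)), S ⊆ σ ∧ B = S.sup id

/-- `a` and `b` lie in a common block of `π`. -/
def Linked {n : ℕ} (π : Finset (Finset (Fin n))) (a b : Fin n) : Prop :=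
  ∃ B ∈ π, a ∈ B ∧ b ∈ B

/-- `a` and `b` are connected in `π`: joined by a chain of pairwise intersecting blocks. -/
def Connected {n : ℕ} (π : Finset (Finset (Fin n))) (a b : Fin n) : Prop :=
  Relation.ReflTransGen (Linked π) a b

/-- The partition `c(π)` of `Fin n` into the connected components of `π`. -/
noncomputable def cPart (n : ℕ) (π : Finset (Finset (Fin n))) : Finset (Finset (Fin n)) :=
  Finset.univ.image fun i => Finset.univ.filter (Connected π i)

/-- Embedding of the unbarred copy: `i ↦ 2 i` in the interleaved order
`1, 1̄, 2, 2̄, …, n, n̄`. -/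
def ueEmb (n : ℕ) (i : Fin n) : Fin (2 * n) := ⟨2 * i.1, by have := i.isLt; omega⟩

/-- Embedding of the barred copy: `i ↦ 2 i + 1` in the interleaved order. -/
def beEmb (n : ℕ) (i : Fin n) : Fin (2 * n) := ⟨2 * i.1 + 1, by have := i.isLt; omega⟩

/-- The union `γ ∪ γ'` inside the interleaved ordered set `1, 1̄, 2, 2̄, …, n, n̄`. -/
def interleave (n : ℕ) (γ γ' : Finset (Finset (Fin n))) : Finset (Finset (Fin (2 * n))) :=
  γ.image (Finset.image (ueEmb n)) ∪ γ'.image (Finset.image (beEmb n))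

/-- `γ'` is the Kreweras complement of `γ`: the largest non-crossing partition (in the
refinement order) such that `γ ∪ γ'` is non-crossing in the interleaved order. -/
def IsKr (n : ℕ) (γ γ' : Finset (Finset (Fin n))) : Prop :=
  IsNC n γ' ∧ IsNC (2 * n) (interleave n γ γ') ∧
  ∀ τ, IsNC n τ → IsNC (2 * n) (interleave n γ τ) → Refines n τ γ'

/-- `B` is an exterior block of `γ`: no other block `D` of `γ` contains elements `l, s`
with `l = min B`, or `l < min B` and `max B < s`. -/
def IsExteriorIn (n : ℕ) (γ : Finset (Finset (Fin n))) (B : Finset (Fin n)) : Prop :=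
  B ∈ γ ∧ ∀ D ∈ γ, D ≠ B → ∀ l ∈ D, ∀ s ∈ D,
    ¬((l ∈ B ∧ ∀ b ∈ B, l ≤ b) ∨ (∀ b ∈ B, l < b ∧ b < s))

/-- Halving map `Fin (2n) → Fin n`. -/
def halfEmb (n : ℕ) (i : Fin (2 * n)) : Fin n := ⟨i.1 / 2, by have := i.isLt; omega⟩

/-- `γ₋`: the restriction of `γ ∈ NC(2n)` to the odd elements `{1, 3, …, 2n − 1}`
(indices `≡ 0 mod 2` in the `0`-based encoding), identified with a partition of `Fin n`. -/
noncomputable def minusPart (n : ℕ) (γ : Finset (Finset (Fin (2 * n)))) :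
    Finset (Finset (Fin n)) :=
  (γ.filter fun B => ∀ i ∈ B, i.1 % 2 = 0).image (Finset.image (halfEmb n))

/-- `γ₊`: the restriction of `γ ∈ NC(2n)` to the even elements `{2, 4, …, 2n}`,
identified with a partition of `Fin n`. -/
noncomputable def plusPart (n : ℕ) (γ : Finset (Finset (Fin (2 * n)))) :
    Finset (Finset (Fin n)) :=
  (γ.filter fun B => ∀ i ∈ B, i.1 % 2 = 1).image (Finset.image (halfEmb n))

/-- `γ ∈ NC_s(2n)`: a non-crossing partition of `{1, …, 2n}` all of whose blocks have
elements of constant parity, with `γ₊ = Kr(γ₋)`. -/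
def NCs (n : ℕ) (γ : Finset (Finset (Fin (2 * n)))) : Prop :=
  IsNC (2 * n) γ ∧
  (∀ B ∈ γ, (∀ i ∈ B, i.1 % 2 = 0) ∨ (∀ i ∈ B, i.1 % 2 = 1)) ∧
  IsKr n (minusPart n γ) (plusPart n γ)

/-- The restriction of `γ` to a subset `S`. -/
noncomputable def restrictTo (n : ℕ) (γ : Finset (Finset (Fin n))) (S : Finset (Fin n)) :
    Finset (Finset (Fin n)) :=
  (γ.image fun B => B ∩ S).filter Finset.Nonempty

/-- A planar rooted tree: a root together with a linearly ordered (left to right) list of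
subtrees. -/
inductive PTree where
  | node : List PTree → PTree

mutual
/-- Number of vertices of a planar rooted tree. -/
def PTree.size : PTree → ℕ
  | .node ts => 1 + sizeList ts
def sizeList : List PTree → ℕ
  | [] => 0
  | t :: ts => PTree.size t + sizeList ts
end

/-- Depth-first indices of the roots of a list of trees, the first root getting index `k`. -/
def childRoots : List PTree → ℕ → List ℕ
  | [], _ => []
  | t :: ts, k => k :: childRoots ts (k + PTree.size t)

mutual
/-- The blocks of the constituent elementary trees (a root together with its offsprings,
provided there is at least one offspring) of a planar tree, with vertices numbered in
depth-first (left-first) order starting at `k`. -/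
def PTree.blk : PTree → ℕ → List (List ℕ)
  | .node ts, k =>
      (if ts.isEmpty then [] else [k :: childRoots ts (k + 1)]) ++ blkList ts (k + 1)
def blkList : List PTree → ℕ → List (List ℕ)
  | [], _ => []
  | t :: ts, k => PTree.blk t k ++ blkList ts (k + PTree.size t)
end

/-- The blocks of the elementary trees constituting a planar tree, in depth-first
numbering starting at `0`; a single vertex is itself an elementary tree. -/
def treeBlocks : PTree → List (List ℕ)
  | .node [] => [[0]]
  | t => t.blk 0

/-- Convert a list of (`0`-based) vertex numbers into a block of `Fin n`. -/
def listToBlock (n : ℕ) (l : List ℕ) : Finset (Fin n) :=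
  (l.filterMap fun i => if h : i < n then some (⟨i, h⟩ : Fin n) else none).toFinset

mutual
/-- Evaluation of a planar rooted tree: the product over its vertices of `f k`, where `k`
is the number of offsprings of the vertex (so an elementary tree with `m` vertices
contributes `f (m − 1)`). -/
def PTree.eval (f : ℕ → ℂ) : PTree → ℂ
  | .node ts => f ts.length * evalList f ts
def evalList (f : ℕ → ℂ) : List PTree → ℂ
  | [] => 1
  | t :: ts => PTree.eval f t * evalList f ts
end

/-- A bicolor planar rooted tree: each subtree carries a color (`true` = color 1,
`false` = color 0). -/
inductive BTree where
  | node : List (Bool × BTree) → BTree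

mutual
/-- Number of vertices of a bicolor planar tree. -/
def BTree.size : BTree → ℕ
  | .node ts => 1 + bsizeList ts
def bsizeList : List (Bool × BTree) → ℕ
  | [] => 0
  | (_, t) :: ts => BTree.size t + bsizeList ts
end

mutual
/-- Validity of a bicolor planar tree: at every vertex, the offsprings of color 1 precede
the offsprings of color 0. -/
def BTree.Valid : BTree → Prop
  | .node ts => List.Chain' (fun a b => b ≤ a) (ts.map Prod.fst) ∧ bvalidList ts
def bvalidList : List (Bool × BTree) → Prop
  | [] => True
  | (_, t) :: ts => BTree.Valid t ∧ bvalidList ts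
end

/-- A bicolor tree is elementary when all offsprings of the root are leaves. -/
def BTree.IsElementary : BTree → Prop
  | .node ts => ∀ p ∈ ts, p.2 = BTree.node []
/-- The term `t_π[X_1, …, X_n]`: the product over blocks `B = (i_1 < … < i_l)` of `π` of
`t_{l−1}(X_{i_1}, …, X_{i_l})`, times the product over `k ∈ s(π)` (the elements that are
not the minimal element of any block) of `t_0(X_k)`. Here `t m` stands for `t_{m−1}`,
taking `m` arguments. -/
noncomputable def tTerm {A : Type*} [Ring A] (t : ∀ m : ℕ, (Fin m → A) → ℂ)
    (n : ℕ) (π : Finset (Finset (Fin n))) (X : Fin n → A) : ℂ :=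
  (∏ B ∈ π, t B.card fun j => X (B.orderIsoOfFin rfl j).1) *
  ∏ k ∈ Finset.univ.filter
      (fun k : Fin n => ∀ B ∈ π, B.min ≠ (k : WithBot (Fin n))),
    t 1 fun _ => X k

/-- The family `t` satisfies the defining recurrence of the `t`-coefficients:
`φ(X_1 ⋯ X_n) = Σ_{π ∈ NCL(n)} t_π[X_1, …, X_n]`. -/
def TRec {A : Type*} [Ring A] [Algebra ℂ A] (φ : A →ₗ[ℂ] ℂ)
    (t : ∀ m : ℕ, (Fin m → A) → ℂ) : Prop :=
  ∀ (n : ℕ) (X : Fin (n + 1) → A),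
    φ (List.ofFn X).prod =
      ∑ π ∈ Finset.univ.filter (fun π => IsNCL (n + 1) π), tTerm t (n + 1) π X

/-- The term `κ_γ[X_1, …, X_n]`: the product over blocks `B = (i_1 < … < i_l)` of `γ` of
`κ_l(X_{i_1}, …, X_{i_l})`. -/
noncomputable def cumTerm {A : Type*} [Ring A] (κ : ∀ m : ℕ, (Fin m → A) → ℂ)
    (n : ℕ) (γ : Finset (Finset (Fin n))) (X : Fin n → A) : ℂ :=
  ∏ B ∈ γ, κ B.card fun j => X (B.orderIsoOfFin rfl j).1

/-- The family `κ` satisfies the moment–cumulant recurrence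
`φ(X_1 ⋯ X_n) = Σ_{γ ∈ NC(n)} κ_γ[X_1, …, X_n]` defining the free cumulants. -/
def CumRec {A : Type*} [Ring A] [Algebra ℂ A] (φ : A →ₗ[ℂ] ℂ)
    (κ : ∀ m : ℕ, (Fin m → A) → ℂ) : Prop :=
  ∀ (n : ℕ) (X : Fin (n + 1) → A),
    φ (List.ofFn X).prod =
      ∑ γ ∈ Finset.univ.filter (fun γ => IsNC (n + 1) γ), cumTerm κ (n + 1) γ X

/-- Free independence of a family of unital subalgebras: alternating products of centered
elements have vanishing expectation. -/
def FreeFamily {A : Type*} [Ring A] [Algebra ℂ A] (φ : A →ₗ[ℂ] ℂ) {I : Type*}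
    (S : I → Subalgebra ℂ A) : Prop :=
  ∀ (n : ℕ) (a : Fin (n + 1) → A) (idx : Fin (n + 1) → I),
    (∀ k, a k ∈ S (idx k)) → (∀ k, φ (a k) = 0) →
    (∀ k : Fin n, idx k.castSucc ≠ idx k.succ) →
    φ (List.ofFn a).prod = 0

/-- Two elements are free if the unital subalgebras they generate are free. -/
def FreePair {A : Type*} [Ring A] [Algebra ℂ A] (φ : A →ₗ[ℂ] ℂ) (X Y : A) : Prop :=
  FreeFamily φ fun b : Bool =>
    if b = true then Algebra.adjoin ℂ {X} else Algebra.adjoin ℂ {Y}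


namespace KW
open Finset

variable {n : ℕ}

/-- membership of `x` in the interval `(min i j, max i j]`. -/
def mem3 (i j x : ℕ) : Prop := (i < x ∧ x ≤ j) ∨ (j < x ∧ x ≤ i)

/-- membership of `x` in the interval `[min i j, max i j)`. -/
def mem3' (i j x : ℕ) : Prop := (i ≤ x ∧ x < j) ∨ (j ≤ x ∧ x < i)

/-- The Kreweras relation of `γ`. -/
def Rel (γ : Finset (Finset (Fin n))) (i j : Fin n) : Prop :=
  ∀ B ∈ γ, ∀ x ∈ B, ∀ y ∈ B, mem3 i j x → mem3 i j y

/-- The dual Kreweras relation. -/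
def Rel' (γ : Finset (Finset (Fin n))) (i j : Fin n) : Prop :=
  ∀ B ∈ γ, ∀ x ∈ B, ∀ y ∈ B, mem3' i j x → mem3' i j y

/-- The Kreweras complement, defined as the classes of `Rel`. -/
noncomputable def KrP (γ : Finset (Finset (Fin n))) : Finset (Finset (Fin n)) :=
  Finset.univ.image fun i => Finset.univ.filter (Rel γ i)

/-- The dual Kreweras complement. -/
noncomputable def KrP' (γ : Finset (Finset (Fin n))) : Finset (Finset (Fin n)) :=
  Finset.univ.image fun i => Finset.univ.filter (Rel' γ i)

variable {γ : Finset (Finset (Fin n))}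

lemma rel_refl (i : Fin n) : Rel γ i i := by
  intro B _ x _ y _ h
  simp only [mem3] at h; omega

lemma rel_symm {i j : Fin n} (h : Rel γ i j) : Rel γ j i := by
  intro B hB x hx y hy hx3
  have := h B hB x hx y hy
  simp only [mem3] at *; omega

lemma rel_trans {i j k : Fin n} (h1 : Rel γ i j) (h2 : Rel γ j k) : Rel γ i k := by
  intro B hB x hx y hy hx3
  have a1 := h1 B hB x hx y hy
  have a2 := h1 B hB y hy x hx
  have b1 := h2 B hB x hx y hy
  have b2 := h2 B hB y hy x hx
  simp only [mem3] at *; omega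

lemma rel'_symm {i j : Fin n} (h : Rel' γ i j) : Rel' γ j i := by
  intro B hB x hx y hy hx3
  have := h B hB x hx y hy
  simp only [mem3'] at *; omega

lemma mem_class {i j : Fin n} : j ∈ Finset.univ.filter (Rel γ i) ↔ Rel γ i j := by
  simp [Finset.mem_filter]

lemma class_mem_KrP (i : Fin n) : Finset.univ.filter (Rel γ i) ∈ KrP γ := by
  exact Finset.mem_image_of_mem _ (Finset.mem_univ i)

lemma mem_KrP {C : Finset (Fin n)} (h : C ∈ KrP γ) :
    ∃ i : Fin n, C = Finset.univ.filter (Rel γ i) := by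
  rcases Finset.mem_image.1 h with ⟨i, _, hi⟩
  exact ⟨i, hi.symm⟩

lemma class_eq_of_rel {i j : Fin n} (h : Rel γ i j) :
    Finset.univ.filter (Rel γ i) = Finset.univ.filter (Rel γ j) := by
  ext a
  simp only [mem_class]
  exact ⟨fun ha => rel_trans (rel_symm h) ha, fun ha => rel_trans h ha⟩

/-- the fundamental non-crossing property of `Rel`'s classes. -/
lemma rel_noncross {i k p q : Fin n} (h1 : (i : ℕ) < k) (h2 : (k : ℕ) < p)
    (h3 : (p : ℕ) < q) (hip : Rel γ i p) (hkq : Rel γ k q) : Rel γ i k := by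
  intro B hB x hx y hy hx3
  by_contra hy3
  have a1 := hip B hB x hx y hy
  have a2 := hkq B hB y hy x hx
  simp only [mem3] at *; omega

lemma KrP_disjoint {C D : Finset (Fin n)} (hC : C ∈ KrP γ) (hD : D ∈ KrP γ)
    (hne : C ≠ D) : Disjoint C D := by
  rcases mem_KrP hC with ⟨i, rfl⟩
  rcases mem_KrP hD with ⟨j, rfl⟩
  rw [Finset.disjoint_left]
  intro a haC haD
  rw [mem_class] at haC haD
  exact hne (class_eq_of_rel (rel_trans haC (rel_symm haD)))

lemma isNC_of_parts {π : Finset (Finset (Fin n))}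
    (h1 : ∀ B ∈ π, B.Nonempty)
    (h2 : ∀ x : Fin n, ∃ B ∈ π, x ∈ B)
    (h3 : ∀ B ∈ π, ∀ C ∈ π, B ≠ C → ¬ Crosses B C)
    (h4 : ∀ B ∈ π, ∀ C ∈ π, B ≠ C → Disjoint B C) : IsNC n π := by
  refine ⟨⟨h1, h2, h3, ?_⟩, h4⟩
  intro B hB C hC hne
  have hd := h4 B hB C hC hne
  rw [Finset.disjoint_iff_inter_eq_empty] at hd
  rw [hd]
  constructor
  · simp
  · intro j hj; exact absurd hj.symm (Finset.singleton_ne_empty j)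

lemma isNC_KrP : IsNC n (KrP γ) := by
  apply isNC_of_parts
  · intro B hB
    rcases mem_KrP hB with ⟨i, rfl⟩
    exact ⟨i, mem_class.2 (rel_refl i)⟩
  · intro x
    exact ⟨_, class_mem_KrP x, mem_class.2 (rel_refl x)⟩
  · intro B hB C hC hne hcr
    rcases hcr with ⟨i, k, p, q, hik, hkp, hpq, hiB, hpB, hkC, hqC⟩
    rcases mem_KrP hB with ⟨b, rfl⟩
    rcases mem_KrP hC with ⟨c, rfl⟩
    rw [mem_class] at hiB hpB hkC hqC
    have hip : Rel γ i p := rel_trans (rel_symm hiB) hpB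
    have hkq : Rel γ k q := rel_trans (rel_symm hkC) hqC
    have hik' : Rel γ i k := rel_noncross hik hkp hpq hip hkq
    have : k ∈ Finset.univ.filter (Rel γ b) := mem_class.2 (rel_trans hiB hik')
    have hdisj := KrP_disjoint (γ := γ) (class_mem_KrP b) (class_mem_KrP c) hne
    exact Finset.disjoint_left.1 hdisj this (mem_class.2 hkC)
  · intro B hB C hC hne
    exact KrP_disjoint hB hC hne

end KW
namespace KW
open Finset

variable {n : ℕ} {γ : Finset (Finset (Fin n))}

lemma mem_ue {B : Finset (Fin n)} {z : Fin (2 * n)} :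
    z ∈ B.image (ueEmb n) ↔ ∃ a ∈ B, (z : ℕ) = 2 * a := by
  simp only [Finset.mem_image]
  constructor
  · rintro ⟨a, ha, rfl⟩; exact ⟨a, ha, rfl⟩
  · rintro ⟨a, ha, hz⟩; exact ⟨a, ha, by apply Fin.ext; exact hz.symm⟩

lemma mem_be {B : Finset (Fin n)} {z : Fin (2 * n)} :
    z ∈ B.image (beEmb n) ↔ ∃ a ∈ B, (z : ℕ) = 2 * a + 1 := by
  simp only [Finset.mem_image]
  constructor
  · rintro ⟨a, ha, rfl⟩; exact ⟨a, ha, rfl⟩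
  · rintro ⟨a, ha, hz⟩; exact ⟨a, ha, by apply Fin.ext; exact hz.symm⟩

lemma ue_ne_be {B C : Finset (Fin n)} (hB : B.Nonempty) :
    B.image (ueEmb n) ≠ C.image (beEmb n) := by
  intro h
  rcases hB with ⟨a, ha⟩
  have : ueEmb n a ∈ C.image (beEmb n) := h ▸ Finset.mem_image_of_mem _ ha
  rcases mem_be.1 this with ⟨c, _, hc⟩
  simp only [ueEmb] at hc; omega

lemma mem_interleave {X : Finset (Fin (2 * n))} {σ : Finset (Finset (Fin n))} :
    X ∈ interleave n γ σ ↔ (∃ B ∈ γ, X = B.image (ueEmb n)) ∨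
      (∃ C ∈ σ, X = C.image (beEmb n)) := by
  simp only [interleave, Finset.mem_union, Finset.mem_image]
  constructor
  · rintro (⟨B, hB, rfl⟩ | ⟨C, hC, rfl⟩)
    · exact Or.inl ⟨B, hB, rfl⟩
    · exact Or.inr ⟨C, hC, rfl⟩
  · rintro (⟨B, hB, rfl⟩ | ⟨C, hC, rfl⟩)
    · exact Or.inl ⟨B, hB, rfl⟩
    · exact Or.inr ⟨C, hC, rfl⟩

/-- crossing elimination for a non-crossing family. -/
lemma cross_elim (hγ : IsNC n γ) {B D : Finset (Fin n)} (hB : B ∈ γ) (hD : D ∈ γ)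
    (hne : B ≠ D) {a b x y : Fin n} (ha : a ∈ B) (hb : b ∈ B) (hx : x ∈ D) (hy : y ∈ D)
    (h1 : (a : ℕ) < x) (h2 : (x : ℕ) < b) (h3 : (b : ℕ) < y) : False := by
  exact hγ.1.2.2.1 B hB D hD hne ⟨a, x, b, y, h1, h2, h3, ha, hb, hx, hy⟩

/-- elements of a block of any `τ` compatible with `γ` in the interleaving are
`Rel γ`-related. -/
lemma rel_of_interleave {τ : Finset (Finset (Fin n))}
    (hI : IsNC (2 * n) (interleave n γ τ))
    {T : Finset (Fin n)} (hT : T ∈ τ) {i j : Fin n} (hi : i ∈ T) (hj : j ∈ T) :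
    Rel γ i j := by
  have core : ∀ i j : Fin n, i ∈ T → j ∈ T → (i : ℕ) < (j : ℕ) → Rel γ i j := by
    clear hi hj
    intro i j hi hj hij
    intro B hB x hx y hy hx3
    by_contra hy3
    simp only [mem3] at hx3 hy3
    have hij' : (i : ℕ) < (j : ℕ) := by omega
    have hxij : (i : ℕ) < x ∧ (x : ℕ) ≤ j := by omega
    have hBne : (B.image (ueEmb n)) ≠ (T.image (beEmb n)) := ue_ne_be ⟨x, hx⟩
    have hBI : B.image (ueEmb n) ∈ interleave n γ τ :=
      mem_interleave.2 (Or.inl ⟨B, hB, rfl⟩)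
    have hTI : T.image (beEmb n) ∈ interleave n γ τ :=
      mem_interleave.2 (Or.inr ⟨T, hT, rfl⟩)
    have hnc1 := hI.1.2.2.1 _ hBI _ hTI hBne
    have hnc2 := hI.1.2.2.1 _ hTI _ hBI (Ne.symm hBne)
    have hyc : (y : ℕ) ≤ i ∨ (j : ℕ) < y := by omega
    rcases hyc with hyc | hyc
    · -- pattern 2y < 2i+1 < 2x < 2j+1 : Crosses (ue B) (be T)
      apply hnc1
      refine ⟨ueEmb n y, beEmb n i, ueEmb n x, beEmb n j, ?_, ?_, ?_,
        Finset.mem_image_of_mem _ hy, Finset.mem_image_of_mem _ hx,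
        Finset.mem_image_of_mem _ hi, Finset.mem_image_of_mem _ hj⟩
      · show 2 * (y : ℕ) < 2 * (i : ℕ) + 1; omega
      · show 2 * (i : ℕ) + 1 < 2 * (x : ℕ); omega
      · show 2 * (x : ℕ) < 2 * (j : ℕ) + 1; omega
    · -- pattern 2i+1 < 2x < 2j+1 < 2y : Crosses (be T) (ue B)
      apply hnc2
      refine ⟨beEmb n i, ueEmb n x, beEmb n j, ueEmb n y, ?_, ?_, ?_,
        Finset.mem_image_of_mem _ hi, Finset.mem_image_of_mem _ hj,
        Finset.mem_image_of_mem _ hx, Finset.mem_image_of_mem _ hy⟩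
      · show 2 * (i : ℕ) + 1 < 2 * (x : ℕ); omega
      · show 2 * (x : ℕ) < 2 * (j : ℕ) + 1; omega
      · show 2 * (j : ℕ) + 1 < 2 * (y : ℕ); omega
  rcases lt_trichotomy (i : ℕ) (j : ℕ) with h | h | h
  · exact core i j hi hj h
  · have : i = j := Fin.ext h
    subst this; exact rel_refl i
  · exact rel_symm (core j i hj hi h)

end KW
namespace KW
open Finset

variable {n : ℕ} {γ : Finset (Finset (Fin n))}

lemma ue_inj : Function.Injective (ueEmb n) := by
  intro a b h
  apply Fin.ext
  have : 2 * (a : ℕ) = 2 * (b : ℕ) := congrArg Fin.val h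
  omega

lemma be_inj : Function.Injective (beEmb n) := by
  intro a b h
  apply Fin.ext
  have : 2 * (a : ℕ) + 1 = 2 * (b : ℕ) + 1 := congrArg Fin.val h
  omega

lemma cross_ue {B C : Finset (Fin n)} (h : Crosses (B.image (ueEmb n)) (C.image (ueEmb n))) :
    Crosses B C := by
  rcases h with ⟨i, k, p, q, h1, h2, h3, hi, hp, hk, hq⟩
  rcases mem_ue.1 hi with ⟨a, ha, hA⟩
  rcases mem_ue.1 hp with ⟨b, hb, hB⟩
  rcases mem_ue.1 hk with ⟨c, hc, hC⟩
  rcases mem_ue.1 hq with ⟨d, hd, hD⟩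
  refine ⟨a, c, b, d, ?_, ?_, ?_, ha, hb, hc, hd⟩
  all_goals
    show _ < _
    have h1' : (i : ℕ) < k := h1
    have h2' : (k : ℕ) < p := h2
    have h3' : (p : ℕ) < q := h3
    omega

lemma cross_be {B C : Finset (Fin n)} (h : Crosses (B.image (beEmb n)) (C.image (beEmb n))) :
    Crosses B C := by
  rcases h with ⟨i, k, p, q, h1, h2, h3, hi, hp, hk, hq⟩
  rcases mem_be.1 hi with ⟨a, ha, hA⟩
  rcases mem_be.1 hp with ⟨b, hb, hB⟩
  rcases mem_be.1 hk with ⟨c, hc, hC⟩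
  rcases mem_be.1 hq with ⟨d, hd, hD⟩
  refine ⟨a, c, b, d, ?_, ?_, ?_, ha, hb, hc, hd⟩
  all_goals
    show _ < _
    have h1' : (i : ℕ) < k := h1
    have h2' : (k : ℕ) < p := h2
    have h3' : (p : ℕ) < q := h3
    omega

/-- `γ ∪ Kr(γ)` is non-crossing in the interleaved order. -/
lemma isNC_interleave_KrP (hγ : IsNC n γ) : IsNC (2 * n) (interleave n γ (KrP γ)) := by
  have hKne : ∀ C ∈ KrP γ, C.Nonempty := isNC_KrP.1.1
  apply isNC_of_parts
  · -- nonempty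
    intro X hX
    rcases mem_interleave.1 hX with ⟨B, hB, rfl⟩ | ⟨C, hC, rfl⟩
    · exact (hγ.1.1 B hB).image _
    · exact (hKne C hC).image _
  · -- cover
    intro z
    rcases Nat.even_or_odd (z : ℕ) with he | ho
    · have hlt : (z : ℕ) / 2 < n := by have := z.isLt; omega
      set a : Fin n := ⟨(z : ℕ) / 2, hlt⟩
      rcases hγ.1.2.1 a with ⟨B, hB, haB⟩
      refine ⟨B.image (ueEmb n), mem_interleave.2 (Or.inl ⟨B, hB, rfl⟩), ?_⟩
      apply mem_ue.2 ⟨a, haB, ?_⟩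
      show (z : ℕ) = 2 * ((z : ℕ) / 2)
      rcases he with ⟨m, hm⟩; omega
    · have hlt : (z : ℕ) / 2 < n := by have := z.isLt; omega
      set a : Fin n := ⟨(z : ℕ) / 2, hlt⟩
      refine ⟨_, mem_interleave.2 (Or.inr ⟨_, class_mem_KrP a, rfl⟩), ?_⟩
      apply mem_be.2 ⟨a, mem_class.2 (rel_refl a), ?_⟩
      show (z : ℕ) = 2 * ((z : ℕ) / 2) + 1
      rcases ho with ⟨m, hm⟩; omega
  · -- noncross
    intro X hX Y hY hne hcr
    rcases mem_interleave.1 hX with ⟨B, hB, rfl⟩ | ⟨C, hC, rfl⟩ <;>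
      rcases mem_interleave.1 hY with ⟨B', hB', rfl⟩ | ⟨C', hC', rfl⟩
    · -- ue vs ue
      have hBB : B ≠ B' := fun h => hne (by rw [h])
      exact hγ.1.2.2.1 B hB B' hB' hBB (cross_ue hcr)
    · -- ue vs be : pattern (2a, 2i+1, 2b, 2j+1)
      rcases hcr with ⟨z1, z2, z3, z4, h1, h2, h3, hz1, hz3, hz2, hz4⟩
      rcases mem_ue.1 hz1 with ⟨a, ha, hA⟩
      rcases mem_ue.1 hz3 with ⟨b, hb, hBv⟩
      rcases mem_be.1 hz2 with ⟨i, hi, hIv⟩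
      rcases mem_be.1 hz4 with ⟨j, hj, hJ⟩
      rcases mem_KrP hC' with ⟨c, rfl⟩
      have hrel : Rel γ i j := rel_trans (rel_symm (mem_class.1 hi)) (mem_class.1 hj)
      have h1' : (z1 : ℕ) < z2 := h1
      have h2' : (z2 : ℕ) < z3 := h2
      have h3' : (z3 : ℕ) < z4 := h3
      have := hrel B hB b hb a ha (by simp only [mem3]; omega)
      simp only [mem3] at this; omega
    · -- be vs ue : pattern (2i+1, 2a, 2j+1, 2b)
      rcases hcr with ⟨z1, z2, z3, z4, h1, h2, h3, hz1, hz3, hz2, hz4⟩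
      rcases mem_be.1 hz1 with ⟨i, hi, hIv⟩
      rcases mem_be.1 hz3 with ⟨j, hj, hJ⟩
      rcases mem_ue.1 hz2 with ⟨a, ha, hA⟩
      rcases mem_ue.1 hz4 with ⟨b, hb, hBv⟩
      rcases mem_KrP hC with ⟨c, rfl⟩
      have hrel : Rel γ i j := rel_trans (rel_symm (mem_class.1 hi)) (mem_class.1 hj)
      have h1' : (z1 : ℕ) < z2 := h1
      have h2' : (z2 : ℕ) < z3 := h2
      have h3' : (z3 : ℕ) < z4 := h3
      have := hrel B' hB' a ha b hb (by simp only [mem3]; omega)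
      simp only [mem3] at this; omega
    · -- be vs be
      have hCC : C ≠ C' := fun h => hne (by rw [h])
      exact isNC_KrP.1.2.2.1 C hC C' hC' hCC (cross_be hcr)
  · -- disjoint
    intro X hX Y hY hne
    rcases mem_interleave.1 hX with ⟨B, hB, rfl⟩ | ⟨C, hC, rfl⟩ <;>
      rcases mem_interleave.1 hY with ⟨B', hB', rfl⟩ | ⟨C', hC', rfl⟩
    · have hBB : B ≠ B' := fun h => hne (by rw [h])
      exact (Finset.disjoint_image ue_inj).2 (hγ.2 B hB B' hB' hBB)
    · rw [Finset.disjoint_left]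
      intro z hz hz'
      rcases mem_ue.1 hz with ⟨a, _, hA⟩
      rcases mem_be.1 hz' with ⟨c, _, hCv⟩
      omega
    · rw [Finset.disjoint_left]
      intro z hz hz'
      rcases mem_be.1 hz with ⟨a, _, hA⟩
      rcases mem_ue.1 hz' with ⟨c, _, hCv⟩
      omega
    · have hCC : C ≠ C' := fun h => hne (by rw [h])
      exact (Finset.disjoint_image be_inj).2 (isNC_KrP.2 C hC C' hC' hCC)

/-- maximality of `KrP γ`. -/
lemma KrP_max {τ : Finset (Finset (Fin n))} (hτ : IsNC n τ)
    (hI : IsNC (2 * n) (interleave n γ τ)) : Refines n τ (KrP γ) := by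
  intro C hC
  rcases mem_KrP hC with ⟨b, rfl⟩
  refine ⟨τ.filter (fun T => T ⊆ Finset.univ.filter (Rel γ b)), Finset.filter_subset _ _, ?_⟩
  apply Finset.Subset.antisymm
  · intro x hx
    have hbx : Rel γ b x := mem_class.1 hx
    rcases hτ.1.2.1 x with ⟨T, hT, hxT⟩
    have hTsub : T ⊆ Finset.univ.filter (Rel γ b) := by
      intro y hy
      exact mem_class.2 (rel_trans hbx (rel_of_interleave hI hT hxT hy))
    rw [Finset.mem_sup]
    exact ⟨T, Finset.mem_filter.2 ⟨hT, hTsub⟩, hxT⟩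
  · intro x hx
    rw [Finset.mem_sup] at hx
    rcases hx with ⟨T, hT, hxT⟩
    exact (Finset.mem_filter.1 hT).2 hxT

/-- `KrP γ` is a Kreweras complement of `γ`. -/
lemma isKr_KrP (hγ : IsNC n γ) : IsKr n γ (KrP γ) :=
  ⟨isNC_KrP, isNC_interleave_KrP hγ, fun _ hτ hI => KrP_max hτ hI⟩

end KW
namespace KW
open Finset

variable {n : ℕ} {γ : Finset (Finset (Fin n))}

lemma refines_subset {σ π : Finset (Finset (Fin n))} (hπ : IsNC n π)
    (h1 : Refines n σ π) (h2 : Refines n π σ) : π ⊆ σ := by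
  intro B hB
  rcases h1 B hB with ⟨S, hS, hBS⟩
  rcases hπ.1.1 B hB with ⟨x, hxB⟩
  have hx' : x ∈ S.sup id := hBS ▸ hxB
  rw [Finset.mem_sup] at hx'
  rcases hx' with ⟨T, hTS, hxT⟩
  have hTσ : T ∈ σ := hS hTS
  rcases h2 T hTσ with ⟨S', hS', hTS'⟩
  have hx'' : x ∈ S'.sup id := hTS' ▸ hxT
  rw [Finset.mem_sup] at hx''
  rcases hx'' with ⟨B', hB'S', hxB'⟩
  have hB'π : B' ∈ π := hS' hB'S'
  have hBB' : B = B' := by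
    by_contra hne
    exact Finset.disjoint_left.1 (hπ.2 B hB B' hB'π hne) hxB hxB'
  have hB'T : B' ⊆ T := by
    rw [hTS']
    exact Finset.le_sup (f := id) hB'S'
  have hTB : T ⊆ B := by
    rw [hBS]
    exact Finset.le_sup (f := id) hTS
  have : T = B := Finset.Subset.antisymm hTB (hBB' ▸ hB'T)
  exact this ▸ hTσ

lemma refines_antisymm {σ π : Finset (Finset (Fin n))} (hσ : IsNC n σ) (hπ : IsNC n π)
    (h1 : Refines n σ π) (h2 : Refines n π σ) : σ = π :=
  Finset.Subset.antisymm (refines_subset hσ h2 h1) (refines_subset hπ h1 h2)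

lemma kr_unique {σ₁ σ₂ : Finset (Finset (Fin n))} (k1 : IsKr n γ σ₁) (k2 : IsKr n γ σ₂) :
    σ₁ = σ₂ :=
  refines_antisymm k1.1 k2.1 (k2.2.2 σ₁ k1.1 k1.2.1) (k1.2.2 σ₂ k2.1 k2.2.1)

lemma claimA (hγ : IsNC n γ) {c e : Fin n} (hce : Rel γ c e)
    (hmin : ∀ y : Fin n, Rel γ c y → (c : ℕ) ≤ y)
    (hmax : ∀ y : Fin n, Rel γ c y → (y : ℕ) ≤ e)
    (hn : (e : ℕ) + 1 < n) : Linked γ c ⟨(e : ℕ) + 1, hn⟩ := by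
  set f : Fin n := ⟨(e : ℕ) + 1, hn⟩ with hf
  have hfv : (f : ℕ) = (e : ℕ) + 1 := rfl
  obtain ⟨B, hB, hfB⟩ := hγ.1.2.1 f
  refine ⟨B, hB, ?_, hfB⟩
  by_contra hc
  have hcLe : (c : ℕ) ≤ e := hmax c (rel_refl c)
  have hgap : ∀ b ∈ B, (b : ℕ) < c ∨ (e : ℕ) < b := by
    intro b hb
    by_contra hcon
    push_neg at hcon
    have hbc : (b : ℕ) ≠ c := fun h => hc (by rwa [show b = c from Fin.ext h] at hb)
    have h3 : mem3 c e f := hce B hB b hb f hfB (by simp only [mem3]; omega)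
    simp only [mem3] at h3; omega
  by_cases hbc : ∃ b ∈ B, (b : ℕ) < c
  · -- there is an element of B below c
    obtain ⟨b0, hb0, hb0c⟩ := hbc
    have hBlne : (B.filter (fun b : Fin n => (b : ℕ) < (c : ℕ))).Nonempty :=
      ⟨b0, Finset.mem_filter.2 ⟨hb0, hb0c⟩⟩
    set c' := (B.filter (fun b : Fin n => (b : ℕ) < (c : ℕ))).max' hBlne with hc'
    have hc'mem := (B.filter (fun b : Fin n => (b : ℕ) < (c : ℕ))).max'_mem hBlne
    rw [Finset.mem_filter] at hc'mem
    have hc'B : c' ∈ B := hc'mem.1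
    have hc'c : (c' : ℕ) < c := hc'mem.2
    have hc'max : ∀ b ∈ B, (b : ℕ) < c → (b : ℕ) ≤ c' := fun b hb h =>
      Finset.le_max' _ b (Finset.mem_filter.2 ⟨hb, h⟩)
    have hrel : Rel γ c' e := by
      intro D hD x hx y hy hx3
      simp only [mem3] at hx3
      have hx3' : (c' : ℕ) < x ∧ (x : ℕ) ≤ e := by omega
      by_cases hDB : D = B
      · have hx' : x ∈ B := hDB ▸ hx
        rcases hgap x hx' with h | h
        · have := hc'max x hx' h; simp only [mem3]; omega
        · simp only [mem3]; omega
      · have hdisj := hγ.2 D hD B hB hDB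
        have hxB : x ∉ B := Finset.disjoint_left.1 hdisj hx
        have hyB : y ∉ B := Finset.disjoint_left.1 hdisj hy
        by_contra hy3
        simp only [mem3] at hy3
        have hyc' : (y : ℕ) ≠ c' := fun h =>
          hyB (by rw [show y = c' from Fin.ext h]; exact hc'B)
        have hyf : (y : ℕ) ≠ (e : ℕ) + 1 := fun h =>
          hyB (by rw [show y = f from Fin.ext (h.trans hfv.symm)]; exact hfB)
        rcases (by omega : (y : ℕ) < c' ∨ (e : ℕ) + 1 < y) with hy' | hy'
        · exact cross_elim hγ hD hB hDB hy hx hc'B hfB hy' (by omega) (by omega)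
        · exact cross_elim hγ hB hD (fun h => hDB h.symm) hc'B hfB hx hy
            (by omega) (by omega) (by omega)
    have : Rel γ c c' := rel_trans hce (rel_symm hrel)
    exact absurd (hmin c' this) (by omega)
  · -- all elements of B exceed e
    push_neg at hbc
    have hall : ∀ b ∈ B, (e : ℕ) < b := by
      intro b hb
      rcases hgap b hb with h | h
      · exact absurd h (by have := hbc b hb; omega)
      · exact h
    set m := B.max' ⟨f, hfB⟩ with hm
    have hmB := B.max'_mem ⟨f, hfB⟩
    have hfm : (f : ℕ) ≤ (m : ℕ) := B.le_max' f hfB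
    have hrel : Rel γ e m := by
      intro D hD x hx y hy hx3
      by_cases hDB : D = B
      · have hy' : y ∈ B := hDB ▸ hy
        have h1 := hall y hy'
        have h2 : (y : ℕ) ≤ (m : ℕ) := B.le_max' y hy'
        simp only [mem3]; omega
      · have hdisj := hγ.2 D hD B hB hDB
        have hxB : x ∉ B := Finset.disjoint_left.1 hdisj hx
        have hyB : y ∉ B := Finset.disjoint_left.1 hdisj hy
        simp only [mem3] at hx3
        have hem : (e : ℕ) < m := hall m hmB
        have hx3' : (e : ℕ) < x ∧ (x : ℕ) ≤ m := by omega
        by_contra hy3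
        simp only [mem3] at hy3
        have hxf : (x : ℕ) ≠ (e : ℕ) + 1 := fun h =>
          hxB (by rw [show x = f from Fin.ext (h.trans hfv.symm)]; exact hfB)
        have hxm : (x : ℕ) ≠ m := fun h =>
          hxB (by rw [show x = m from Fin.ext h]; exact hmB)
        rcases (by omega : (y : ℕ) ≤ e ∨ (m : ℕ) < y) with hy' | hy'
        · exact cross_elim hγ hD hB hDB hy hx hfB hmB (by omega) (by omega) (by omega)
        · exact cross_elim hγ hB hD (fun h => hDB h.symm) hfB hmB hx hy
            (by omega) (by omega) hy'
    have : Rel γ c m := rel_trans hce hrel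
    have := hmax m this
    omega

end KW
namespace KW
open Finset

variable {n : ℕ} {γ : Finset (Finset (Fin n))}

lemma T1 (hγ : IsNC n γ) {B : Finset (Fin n)} (hB : B ∈ γ) {i j : Fin n}
    (hi : i ∈ B) (hj : j ∈ B) : Rel' (KrP γ) i j := by
  intro C hC x hx y hy hx3
  by_contra hy3
  rcases mem_KrP hC with ⟨b, rfl⟩
  rw [mem_class] at hx hy
  have hxy : Rel γ x y := rel_trans (rel_symm hx) hy
  have a1 := hxy B hB i hi j hj
  have a2 := hxy B hB j hj i hi
  simp only [mem3, mem3'] at *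
  omega

lemma linked_trans (hγ : IsNC n γ) {a b c : Fin n} (h1 : Linked γ a b)
    (h2 : Linked γ b c) : Linked γ a c := by
  rcases h1 with ⟨B, hB, haB, hbB⟩
  rcases h2 with ⟨C, hC, hbC, hcC⟩
  have hBC : B = C := by
    by_contra hne
    exact Finset.disjoint_left.1 (hγ.2 B hB C hC hne) hbB hbC
  exact ⟨B, hB, haB, hBC ▸ hcC⟩

lemma T2 (hγ : IsNC n γ) {i j : Fin n} (hij : (i : ℕ) < j)
    (hR : Rel' (KrP γ) i j) : Linked γ i j := by
  have main : ∀ N : ℕ, ∀ x : Fin n, (j : ℕ) - (x : ℕ) ≤ N →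
      (i : ℕ) ≤ x → (x : ℕ) ≤ j → Linked γ i x →
      (∀ y : Fin n, (i : ℕ) ≤ y → (y : ℕ) < x → ∀ z : Fin n, Rel γ y z →
        (i : ℕ) ≤ z ∧ (z : ℕ) < x) →
      Linked γ i j := by
    intro N
    induction N with
    | zero =>
      intro x h1 h2 h3 h4 _
      have : x = j := Fin.ext (by omega)
      exact this ▸ h4
    | succ N ih =>
      intro x hN hix hxj hlink hinv
      by_cases hxj' : (x : ℕ) = j
      · exact (Fin.ext hxj' : x = j) ▸ hlink
      have hxj2 : (x : ℕ) < j := by omega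
      have hmin : ∀ y : Fin n, Rel γ x y → (x : ℕ) ≤ y := by
        intro y hy
        by_contra hxy
        push_neg at hxy
        rcases le_or_gt (i : ℕ) (y : ℕ) with h | h
        · exact absurd (hinv y h hxy x (rel_symm hy)).2 (by omega)
        · have := hR _ (class_mem_KrP x) x (mem_class.2 (rel_refl x)) y (mem_class.2 hy)
            (by simp only [mem3']; omega)
          simp only [mem3'] at this; omega
      set C := Finset.univ.filter (Rel γ x) with hC
      have hCne : C.Nonempty := ⟨x, mem_class.2 (rel_refl x)⟩
      set e := C.max' hCne with he
      have heC : e ∈ C := C.max'_mem hCne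
      have hxe : Rel γ x e := mem_class.1 heC
      have hmax : ∀ y : Fin n, Rel γ x y → (y : ℕ) ≤ e := fun y hy =>
        C.le_max' y (mem_class.2 hy)
      have hxele : (x : ℕ) ≤ e := hmin e hxe
      have hej : (e : ℕ) < j := by
        have := hR _ (class_mem_KrP x) x (mem_class.2 (rel_refl x)) e heC
          (by simp only [mem3']; omega)
        simp only [mem3'] at this; omega
      have hn1 : (e : ℕ) + 1 < n := by have := j.isLt; omega
      set f : Fin n := ⟨(e : ℕ) + 1, hn1⟩ with hf
      have hfv : (f : ℕ) = (e : ℕ) + 1 := rfl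
      have hlf : Linked γ i f := linked_trans hγ hlink (claimA hγ hxe hmin hmax hn1)
      by_cases hfj : (f : ℕ) = j
      · exact (Fin.ext hfj : f = j) ▸ hlf
      · apply ih f (by omega) (by omega) (by omega) hlf
        intro y hiy hyf z hyz
        rcases lt_or_ge (y : ℕ) (x : ℕ) with h | h
        · have := hinv y hiy h z hyz
          exact ⟨this.1, by omega⟩
        · by_cases hxy : Rel γ x y
          · have hxz : Rel γ x z := rel_trans hxy hyz
            exact ⟨by have := hmin z hxz; omega, by have := hmax z hxz; omega⟩
          · have hyx : (x : ℕ) < y := by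
              rcases eq_or_lt_of_le h with h' | h'
              · exact absurd (by rw [show y = x from Fin.ext h'.symm]; exact rel_refl x) hxy
              · exact h'
            have hye : (y : ℕ) < e := by
              rcases eq_or_lt_of_le (show (y : ℕ) ≤ e by omega) with h' | h'
              · exact absurd (by rw [show y = e from Fin.ext h']; exact hxe) hxy
              · exact h'
            have hz_ge : (i : ℕ) ≤ z := by
              have := hR _ (class_mem_KrP y) y (mem_class.2 (rel_refl y)) z (mem_class.2 hyz)
                (by simp only [mem3']; omega)
              simp only [mem3'] at this; omega
            have hz_lt : (z : ℕ) < (e : ℕ) + 1 := by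
              by_contra hz
              push_neg at hz
              exact hxy (rel_noncross hyx hye (by omega) hxe hyz)
            exact ⟨hz_ge, by omega⟩
  rcases hγ.1.2.1 i with ⟨B, hB, hiB⟩
  exact main ((j : ℕ) - i) i le_rfl le_rfl (by omega) ⟨B, hB, hiB, hiB⟩
    (fun y h1 h2 z hz => by omega)

lemma class'_eq (hγ : IsNC n γ) {B : Finset (Fin n)} (hB : B ∈ γ) {i : Fin n}
    (hi : i ∈ B) : Finset.univ.filter (Rel' (KrP γ) i) = B := by
  ext j
  simp only [Finset.mem_filter, Finset.mem_univ, true_and]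
  constructor
  · intro hj
    rcases lt_trichotomy (i : ℕ) (j : ℕ) with h | h | h
    · rcases T2 hγ h hj with ⟨B', hB', hiB', hjB'⟩
      have hBB : B' = B := by
        by_contra hne
        exact Finset.disjoint_left.1 (hγ.2 B' hB' B hB hne) hiB' hi
      exact hBB ▸ hjB'
    · exact (Fin.ext h : i = j) ▸ hi
    · rcases T2 hγ h (rel'_symm hj) with ⟨B', hB', hjB', hiB'⟩
      have hBB : B' = B := by
        by_contra hne
        exact Finset.disjoint_left.1 (hγ.2 B' hB' B hB hne) hiB' hi
      exact hBB ▸ hjB'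
  · intro hj
    exact T1 hγ hB hi hj

lemma INV1 (hγ : IsNC n γ) : KrP' (KrP γ) = γ := by
  ext X
  constructor
  · intro hX
    rcases Finset.mem_image.1 hX with ⟨i, _, rfl⟩
    rcases hγ.1.2.1 i with ⟨B, hB, hiB⟩
    rw [class'_eq hγ hB hiB]
    exact hB
  · intro hX
    rcases hγ.1.1 X hX with ⟨i, hiX⟩
    rw [show X = Finset.univ.filter (Rel' (KrP γ) i) from (class'_eq hγ hX hiX).symm]
    exact Finset.mem_image_of_mem _ (Finset.mem_univ i)

end KW
/-- The Kreweras complement `Kr : NC(n) → NC(n)` is a well-defined bijection: every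
`γ ∈ NC(n)` has a unique Kreweras complement, distinct elements have distinct
complements, and every element of `NC(n)` is a Kreweras complement. -/
theorem kreweras_bijective (n : ℕ) :
    (∀ γ : Finset (Finset (Fin n)), IsNC n γ → ∃! γ', IsKr n γ γ') ∧
    (∀ γ₁ γ₂ γ' : Finset (Finset (Fin n)), IsNC n γ₁ → IsNC n γ₂ →
      IsKr n γ₁ γ' → IsKr n γ₂ γ' → γ₁ = γ₂) ∧
    (∀ γ' : Finset (Finset (Fin n)), IsNC n γ' → ∃ γ, IsNC n γ ∧ IsKr n γ γ') := by
  refine ⟨?_, ?_, ?_⟩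
  · intro γ hγ
    exact ⟨KW.KrP γ, KW.isKr_KrP hγ, fun σ hσ => KW.kr_unique hσ (KW.isKr_KrP hγ)⟩
  · intro γ₁ γ₂ γ' h1 h2 k1 k2
    have e1 : γ' = KW.KrP γ₁ := KW.kr_unique k1 (KW.isKr_KrP h1)
    have e2 : γ' = KW.KrP γ₂ := KW.kr_unique k2 (KW.isKr_KrP h2)
    have e3 : KW.KrP' (KW.KrP γ₁) = KW.KrP' (KW.KrP γ₂) := by rw [← e1, ← e2]
    rwa [KW.INV1 h1, KW.INV1 h2] at e3
  · intro γ' hγ'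
    classical
    let S := {π : Finset (Finset (Fin n)) // IsNC n π}
    let F : S → S := fun π => ⟨KW.KrP π.1, KW.isNC_KrP⟩
    have hinj : Function.Injective F := by
      intro a b hab
      have h1 : KW.KrP a.1 = KW.KrP b.1 := congrArg Subtype.val hab
      apply Subtype.ext
      have h2 := congrArg KW.KrP' h1
      rwa [KW.INV1 a.2, KW.INV1 b.2] at h2
    have hsurj : Function.Surjective F := Finite.surjective_of_injective hinj
    rcases hsurj ⟨γ', hγ'⟩ with ⟨⟨γ, hγ⟩, hF⟩
    refine ⟨γ, hγ, ?_⟩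
    have hKr : KW.KrP γ = γ' := congrArg Subtype.val hF
    exact hKr ▸ KW.isKr_KrP hγ
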